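/- For every ε > 0 there exists δ > 0 such that for all p ∈ (p_0, p_0 + δ): the integer n(p) exists and (1 − ε)·p^{n(p)+1} < s(p) < (1 + ε)·p^{n(p)}. -/

import Mathlib

/-- `v p n` is the optimal expected number of heads in the coin game with `n` coins,
each landing heads with probability `p`. -/
noncomputable def v (p : ℝ) : ℕ → ℝ
  | 0 => 0
  | n + 1 =>
      ((n : ℝ) + 1) * p ^ (n + 1) + v p n * (1 - p) ^ (n + 1) +
        ∑ j ∈ (Finset.Icc 1 n).attach,
          (((n + 1).choose j.1 : ℕ) : ℝ) * p ^ (j.1 : ℕ) * (1 - p) ^ (n + 1 - j.1) *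
            ((Finset.Icc 1 j.1).attach.sup'
              (Finset.attach_nonempty_iff.mpr
                (Finset.nonempty_Icc.mpr (Finset.mem_Icc.mp j.2).1))
              (fun i => v p (n + 1 - i.1) + (i.1 : ℝ)))
decreasing_by
  · omega
  · have h := (Finset.mem_Icc.mp i.2).1
    omega

/-- `s p n = v p n - n + 1 - p`. -/
noncomputable def s (p : ℝ) (n : ℕ) : ℝ := v p n - n + 1 - p

lemma v_eq_s (p : ℝ) (n : ℕ) : v p n = s p n + n - 1 + p := by simp [s]; ring
lemma v_zero (p : ℝ) : v p 0 = 0 := by simp [v]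
lemma v_succ (p : ℝ) (n : ℕ) : v p (n+1) =
    ((n : ℝ) + 1) * p ^ (n + 1) + v p n * (1 - p) ^ (n + 1) +
        ∑ j ∈ (Finset.Icc 1 n).attach,
          (((n + 1).choose j.1 : ℕ) : ℝ) * p ^ (j.1 : ℕ) * (1 - p) ^ (n + 1 - j.1) *
            ((Finset.Icc 1 j.1).attach.sup'
              (Finset.attach_nonempty_iff.mpr
                (Finset.nonempty_Icc.mpr (Finset.mem_Icc.mp j.2).1))
              (fun i => v p (n + 1 - i.1) + (i.1 : ℝ))) := by
  rw [v]
lemma v_one (p : ℝ) : v p 1 = p := by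
  rw [v_succ]
  rw [Finset.sum_eq_zero (fun x _ => absurd (Finset.mem_Icc.mp x.2) (by omega))]
  simp [v_zero]
lemma s_one (p : ℝ) : s p 1 = 0 := by simp [s, v_one]

lemma sup_eval (p : ℝ) (n : ℕ)
    (hmono : ∀ k, 2 ≤ k → k ≤ n → s p k ≤ s p n)
    (j : ℕ) (h1 : 1 ≤ j) (hjn : j ≤ n) (hne : (Finset.Icc 1 j).attach.Nonempty) :
    (Finset.Icc 1 j).attach.sup' hne (fun i => v p (n + 1 - i.1) + (i.1 : ℝ))
      = if j = n then max (v p n + 1) (p + n) else v p n + 1 := by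
  have hn : 1 ≤ n := le_trans h1 hjn
  apply le_antisymm
  · apply Finset.sup'_le
    intro i _
    obtain ⟨hi1, hij⟩ := Finset.mem_Icc.mp i.2
    have hkn : n + 1 - i.1 ≤ n := by omega
    have hcast : ((n + 1 - i.1 : ℕ) : ℝ) = (n : ℝ) + 1 - (i.1 : ℝ) := by
      rw [Nat.cast_sub (by omega)]; push_cast; ring
    rcases Nat.lt_or_ge (n + 1 - i.1) 2 with hk | hk
    · -- n + 1 - i = 1, so i = n, j = n
      have hi : i.1 = n := by omega
      have hjn' : j = n := by omega
      have : v p (n + 1 - i.1) + (i.1 : ℝ) = p + n := by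
        rw [show n + 1 - i.1 = 1 by omega, v_one, hi]
      rw [this, if_pos hjn']
      exact le_max_right _ _
    · have hs := hmono (n + 1 - i.1) hk hkn
      have hle : v p (n + 1 - i.1) + (i.1 : ℝ) ≤ v p n + 1 := by
        rw [v_eq_s p (n + 1 - i.1), v_eq_s p n, hcast]
        have : (i.1 : ℝ) ≥ 1 := by exact_mod_cast hi1
        linarith
      by_cases hjn' : j = n
      · rw [if_pos hjn']; exact le_trans hle (le_max_left _ _)
      · rwa [if_neg hjn']
  · by_cases hjn' : j = n
    · rw [if_pos hjn']
      apply max_le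
      · have h1m : (⟨1, Finset.mem_Icc.mpr ⟨le_refl 1, h1⟩⟩ : {x // x ∈ Finset.Icc 1 j}) ∈
          (Finset.Icc 1 j).attach := Finset.mem_attach _ _
        have := Finset.le_sup' (fun i : {x // x ∈ Finset.Icc 1 j} =>
          v p (n + 1 - i.1) + (i.1 : ℝ)) h1m
        convert this using 1; simp
      · have hjm : (⟨j, Finset.mem_Icc.mpr ⟨h1, le_refl j⟩⟩ : {x // x ∈ Finset.Icc 1 j}) ∈
          (Finset.Icc 1 j).attach := Finset.mem_attach _ _
        have hx := Finset.le_sup' (fun i : {x // x ∈ Finset.Icc 1 j} =>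
          v p (n + 1 - i.1) + (i.1 : ℝ)) hjm
        simp only [show n + 1 - j = 1 by omega, v_one] at hx
        have hcst : p + (n : ℝ) = p + (j : ℝ) := by rw [hjn']
        rw [hcst]
        exact hx
    · rw [if_neg hjn']
      have h1m : (⟨1, Finset.mem_Icc.mpr ⟨le_refl 1, h1⟩⟩ : {x // x ∈ Finset.Icc 1 j}) ∈
        (Finset.Icc 1 j).attach := Finset.mem_attach _ _
      have := Finset.le_sup' (fun i : {x // x ∈ Finset.Icc 1 j} =>
        v p (n + 1 - i.1) + (i.1 : ℝ)) h1m
      convert this using 1; simp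

lemma binom_sum (p : ℝ) (n : ℕ) :
    ∑ j ∈ Finset.Icc 1 n, (((n + 1).choose j : ℕ) : ℝ) * p ^ j * (1 - p) ^ (n + 1 - j)
      = 1 - p ^ (n+1) - (1 - p) ^ (n+1) := by
  have hb : (1 : ℝ) = ∑ k ∈ Finset.range (n + 2),
      p ^ k * (1 - p) ^ (n + 1 - k) * ((n+1).choose k : ℕ) := by
    have := add_pow p (1 - p) (n + 1)
    simp only [add_sub_cancel, one_pow] at this
    exact this
  rw [Finset.range_eq_Ico] at hb
  rw [Finset.sum_eq_sum_Ico_succ_bot (by omega)] at hb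
  rw [Finset.sum_Ico_succ_top (by omega)] at hb
  rw [Finset.Ico_add_one_right_eq_Icc] at hb
  simp only [zero_add, pow_zero, Nat.sub_zero, Nat.choose_zero_right, Nat.cast_one, one_mul, mul_one,
    Nat.sub_self, Nat.choose_self] at hb
  have hc : ∑ j ∈ Finset.Icc 1 n, (((n + 1).choose j : ℕ) : ℝ) * p ^ j * (1 - p) ^ (n + 1 - j)
      = ∑ j ∈ Finset.Icc 1 n, p ^ j * (1 - p) ^ (n + 1 - j) * ((n+1).choose j : ℕ) := by
    apply Finset.sum_congr rfl; intro j _; ring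
  rw [hc]
  linarith [hb]

lemma s_rec (p : ℝ) (n : ℕ) (hn : 1 ≤ n)
    (hmono : ∀ k, 2 ≤ k → k ≤ n → s p k ≤ s p n) :
    s p (n+1) = s p n + p^(n+1) * (1 - p - s p n) - (1-p)^(n+1)
      + ((n:ℝ)+1) * p^n * (1-p) * max (-(s p n)) 0 := by
  have hsum : (∑ j ∈ (Finset.Icc 1 n).attach,
      (((n + 1).choose j.1 : ℕ) : ℝ) * p ^ (j.1 : ℕ) * (1 - p) ^ (n + 1 - j.1) *
        ((Finset.Icc 1 j.1).attach.sup'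
          (Finset.attach_nonempty_iff.mpr
            (Finset.nonempty_Icc.mpr (Finset.mem_Icc.mp j.2).1))
          (fun i => v p (n + 1 - i.1) + (i.1 : ℝ))))
    = ∑ j ∈ (Finset.Icc 1 n).attach,
      (((n + 1).choose j.1 : ℕ) : ℝ) * p ^ (j.1 : ℕ) * (1 - p) ^ (n + 1 - j.1) *
        (if j.1 = n then max (v p n + 1) (p + n) else v p n + 1) := by
    apply Finset.sum_congr rfl
    intro j _
    obtain ⟨h1, h2⟩ := Finset.mem_Icc.mp j.2
    rw [sup_eval p n hmono j.1 h1 h2]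
  have hv1 : v p (n+1) = ((n : ℝ) + 1) * p ^ (n + 1) + v p n * (1 - p) ^ (n + 1) +
      ∑ j ∈ Finset.Icc 1 n,
        (((n + 1).choose j : ℕ) : ℝ) * p ^ j * (1 - p) ^ (n + 1 - j) *
          (if j = n then max (v p n + 1) (p + n) else v p n + 1) := by
    rw [v_succ, hsum]
    rw [Finset.sum_attach (Finset.Icc 1 n) (fun j =>
        (((n + 1).choose j : ℕ) : ℝ) * p ^ j * (1 - p) ^ (n + 1 - j) *
          (if j = n then max (v p n + 1) (p + n) else v p n + 1))]
  have hsplit : ∑ j ∈ Finset.Icc 1 n,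
      (((n + 1).choose j : ℕ) : ℝ) * p ^ j * (1 - p) ^ (n + 1 - j) *
        (if j = n then max (v p n + 1) (p + n) else v p n + 1)
    = (1 - p ^ (n+1) - (1 - p) ^ (n+1)) * (v p n + 1)
      + ((n:ℝ)+1) * p^n * (1-p) * (max (v p n + 1) (p + n) - (v p n + 1)) := by
    have hpt : ∀ j ∈ Finset.Icc 1 n,
        (((n + 1).choose j : ℕ) : ℝ) * p ^ j * (1 - p) ^ (n + 1 - j) *
          (if j = n then max (v p n + 1) (p + n) else v p n + 1)
        = (((n + 1).choose j : ℕ) : ℝ) * p ^ j * (1 - p) ^ (n + 1 - j) * (v p n + 1)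
          + (if j = n then (((n + 1).choose j : ℕ) : ℝ) * p ^ j * (1 - p) ^ (n + 1 - j) *
              (max (v p n + 1) (p + n) - (v p n + 1)) else 0) := by
      intro j _
      by_cases hj : j = n
      · rw [if_pos hj, if_pos hj]; ring
      · rw [if_neg hj, if_neg hj]; ring
    rw [Finset.sum_congr rfl hpt, Finset.sum_add_distrib, ← Finset.sum_mul, binom_sum]
    congr 1
    rw [Finset.sum_ite_eq' (Finset.Icc 1 n) n]
    rw [if_pos (Finset.mem_Icc.mpr ⟨hn, le_refl n⟩)]
    rw [Nat.choose_succ_self_right, show n + 1 - n = 1 by omega]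
    push_cast
    ring
  rw [hsplit] at hv1
  have hmax : max (v p n + 1) (p + n) - (v p n + 1) = max (-(s p n)) 0 := by
    have h1 : p + (n:ℝ) - (v p n + 1) = -(s p n) := by rw [v_eq_s]; ring
    rcases le_total (p + (n:ℝ)) (v p n + 1) with h | h
    · rw [max_eq_left h, max_eq_right (by linarith)]; ring
    · rw [max_eq_right h, max_eq_left (by linarith)]; linarith
  rw [hmax] at hv1
  have hv : v p n = s p n + n - 1 + p := v_eq_s p n
  have hs : s p (n+1) = v p (n+1) - ((n:ℝ)+1) + 1 - p := by
    simp only [s]; push_cast; ring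
  rw [hv1, hv] at hs
  rw [hs]
  have hpow : p ^ (n+1) = p ^ n * p := pow_succ p n
  rw [hpow]
  ring

noncomputable def F (p : ℝ) (k : ℕ) : ℝ := p^k + k * p^(k-1) * (1-p)
noncomputable def G (p : ℝ) (k : ℕ) : ℝ := (1-p)^k - (1-p) * p^k

lemma F_succ (p : ℝ) (n : ℕ) : F p (n+1) = p^(n+1) + ((n:ℝ)+1) * p^n * (1-p) := by
  simp [F]

lemma s_rec_neg (p : ℝ) (n : ℕ) (hn : 1 ≤ n)
    (hmono : ∀ k, 2 ≤ k → k ≤ n → s p k ≤ s p n) (hs : s p n ≤ 0) :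
    s p (n+1) = s p n * (1 - F p (n+1)) - G p (n+1) := by
  rw [s_rec p n hn hmono, F_succ, G, max_eq_left (by linarith)]
  rw [pow_succ p n]
  ring

lemma s_rec_pos (p : ℝ) (n : ℕ) (hn : 1 ≤ n)
    (hmono : ∀ k, 2 ≤ k → k ≤ n → s p k ≤ s p n) (hs : 0 ≤ s p n) :
    s p (n+1) = s p n * (1 - p^(n+1)) - G p (n+1) := by
  rw [s_rec p n hn hmono, G, max_eq_right (by linarith)]
  ring

section master
variable {p : ℝ} (hp : 1/2 ≤ p) (hp1 : p < 1)

include hp hp1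

lemma hp_pos : 0 < p := by linarith
lemma hq_pos : 0 < 1 - p := by linarith
lemma hpq : 1 - p ≤ p := by linarith

lemma F_pos (k : ℕ) : 0 < F p k := by
  have h1 : (0:ℝ) < p ^ k := pow_pos (by linarith) k
  have h2 : (0:ℝ) ≤ (k:ℝ) * p^(k-1) * (1-p) := by
    apply mul_nonneg (mul_nonneg (by positivity) (by positivity)); linarith
  simp only [F]; linarith

lemma F_le (k : ℕ) (hk : 2 ≤ k) : F p k ≤ 2*p - p^2 := by
  induction k, hk using Nat.le_induction with
  | base => simp only [F]; norm_num; nlinarith [sq_nonneg p]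
  | succ n hn ih =>
    have hdiff : F p (n+1) = F p n - (n:ℝ) * p^(n-1) * (1-p)^2 := by
      obtain ⟨m, rfl⟩ : ∃ m, n = m + 1 := ⟨n - 1, by omega⟩
      simp only [F, Nat.add_sub_cancel]
      rw [pow_succ p (m+1), pow_succ p m]
      push_cast
      ring
    have : (0:ℝ) ≤ (n:ℝ) * p^(n-1) * (1-p)^2 := by positivity
    linarith

lemma F_le_one (k : ℕ) (hk : 2 ≤ k) : F p k ≤ 1 := by
  have := F_le hp hp1 k hk
  nlinarith [sq_nonneg (1-p)]

-- key comparison lemma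
lemma keyK (n : ℕ) (hn : 2 ≤ n) (hG : 0 < G p (n+2)) :
    G p (n+2) * F p (n+1) ≤ G p (n+1) * F p (n+2) := by
  set P := p ^ n with hP
  set Q := (1-p) ^ n with hQ
  have hPpos : 0 < P := pow_pos (by linarith) n
  have hQpos : 0 < Q := pow_pos (by linarith) n
  have e1 : G p (n+1) = (1-p) * (Q - p * P) := by
    simp only [G, hP, hQ, pow_succ]; ring
  have e2 : G p (n+2) = (1-p) * ((1-p)*Q - p^2 * P) := by
    simp only [G, hP, hQ, pow_succ]; ring
  have e3 : F p (n+1) = P * (p + ((n:ℝ)+1) * (1-p)) := by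
    rw [F_succ, hP, pow_succ]; ring
  have e4 : F p (n+2) = p * P * (p + ((n:ℝ)+2) * (1-p)) := by
    rw [show n+2 = (n+1)+1 by ring, F_succ, hP, pow_succ, pow_succ]; push_cast; ring
  have h5 : p^2 * P < (1-p) * Q := by nlinarith [hG, e2]
  have hQP : p * P ≤ Q := by nlinarith [h5, hPpos, hQpos]
  rw [e1, e2, e3, e4]
  have c0 : (0:ℝ) ≤ ((n:ℝ)+1)*(1-p)*(2*p-1) := by
    apply mul_nonneg (mul_nonneg (by positivity) (by linarith)) (by linarith)
  have t2 : p^2*(p*P) ≤ p^2*Q := mul_le_mul_of_nonneg_left hQP (sq_nonneg p)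
  have t1 : p^2*(1-p)*P ≤ p^2*(p*P) := by
    have h6 := mul_le_mul_of_nonneg_left (show (1:ℝ)-p ≤ p by linarith)
      (by positivity : (0:ℝ) ≤ p^2*P)
    nlinarith [h6]
  have t3 : p^2*Q ≤ Q*(p^2 + ((n:ℝ)+1)*(1-p)*(2*p-1)) := by nlinarith [mul_nonneg hQpos.le c0]
  have inner : (0:ℝ) ≤ Q*(p^2 + ((n:ℝ)+1)*(1-p)*(2*p-1)) - p^2*(1-p)*P := by linarith
  have expand : (1-p) * (Q - p*P) * (p * P * (p + ((n:ℝ)+2) * (1-p)))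
      - (1-p) * ((1-p)*Q - p^2 * P) * (P * (p + ((n:ℝ)+1) * (1-p)))
      = (1-p) * P * (Q*(p^2 + ((n:ℝ)+1)*(1-p)*(2*p-1)) - p^2*(1-p)*P) := by ring
  nlinarith [mul_nonneg (mul_nonneg (by linarith : (0:ℝ) ≤ 1-p) hPpos.le) inner, expand]

lemma s_two : s p 2 = (1-p)*p^2 - (1-p)^2 := by
  have h := s_rec p 1 (le_refl 1) (by intro k hk hk'; omega)
  rw [s_one] at h
  rw [h]
  norm_num
  ring

lemma master : ∀ n, 2 ≤ n →
    (∀ k, 2 ≤ k → k ≤ n → s p k ≤ s p n) ∧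
    (s p n < 0 → G p (n+1) ≤ (-(s p n)) * F p (n+1)) ∧
    (0 ≤ s p n → p^n * s p n ≤ (1-p)*p^n - (1-p)^n) := by
  intro n hn
  induction n, hn using Nat.le_induction with
  | base =>
    refine ⟨?_, ?_, ?_⟩
    · intro k hk hk'
      have : k = 2 := by omega
      rw [this]
    · intro hneg
      have hs2 := s_two hp hp1
      have e1 : G p 3 = (1-p)^3 - (1-p)*p^3 := by simp [G]
      have e2 : F p 3 = p^3 + 3*p^2*(1-p) := by simp [F]
      have key : ((1-p)^2 - (1-p)*p^2)*(p^3+3*p^2*(1-p)) - ((1-p)^3 - (1-p)*p^3)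
          = (1-p)*((2*p-1)*(1-p^2)^2) := by ring
      have pos : (0:ℝ) ≤ (1-p)*((2*p-1)*(1-p^2)^2) := by
        apply mul_nonneg (by linarith)
        apply mul_nonneg (by linarith) (sq_nonneg _)
      rw [e1, e2, hs2]
      nlinarith [key, pos]
    · intro hpos
      have hs2 := s_two hp hp1
      have hD : 0 ≤ (1-p)*p^2 - (1-p)^2 := by rw [← hs2]; exact hpos
      rw [hs2]
      nlinarith [sq_nonneg p, hD]
  | succ n hn2 ih =>
    obtain ⟨ihmono, ihneg, ihpos⟩ := ih
    have hmono' : ∀ k, 2 ≤ k → k ≤ n → s p k ≤ s p n := ihmono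
    have hFpos := F_pos hp hp1 (n+1)
    have hF1 := F_le_one hp hp1 (n+1) (by omega)
    have hppow : (0:ℝ) < p^(n+1) := pow_pos (by linarith) _
    have hppow1 : p^(n+1) ≤ 1 := pow_le_one₀ (by linarith) (by linarith)
    rcases lt_or_ge (s p n) 0 with hsn | hsn
    · -- negative regime
      have hrec := s_rec_neg p n (by omega) hmono' hsn.le
      have hNeg := ihneg hsn
      have hinc : s p n ≤ s p (n+1) := by nlinarith [hrec, hNeg, hFpos, mul_nonneg (le_of_lt (neg_pos.mpr hsn)) (sub_nonneg.mpr hF1)]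
      refine ⟨?_, ?_, ?_⟩
      · intro k hk hk'
        rcases Nat.lt_or_ge k (n+1) with h | h
        · exact le_trans (ihmono k hk (by omega)) hinc
        · have : k = n+1 := by omega
          rw [this]
      · intro hneg1
        rcases le_or_gt (G p (n+2)) 0 with hG2 | hG2
        · have : 0 < (-(s p (n+1))) * F p (n+2) :=
            mul_pos (neg_pos.mpr hneg1) (F_pos hp hp1 (n+2))
          linarith
        · have hK := keyK hp hp1 n hn2 hG2
          have hF2pos := F_pos hp hp1 (n+2)
          -- (-s_{n+1}) * F(n+2) * F(n+1) ≥ G(n+1) * F(n+2) ≥ G(n+2) * F(n+1)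
          have step1 : G p (n+1) * F p (n+2) ≤ (-(s p (n+1))) * F p (n+2) * F p (n+1) := by
            have hs1 : -(s p (n+1)) = (-(s p n)) * (1 - F p (n+1)) + G p (n+1) := by
              rw [hrec]; ring
            have h7 : G p (n+1) * (1 - F p (n+1)) ≤ ((-(s p n)) * F p (n+1)) * (1 - F p (n+1)) :=
              mul_le_mul_of_nonneg_right hNeg (by linarith)
            -- multiply out:
            have h8 : (-(s p (n+1))) * F p (n+1) ≥ G p (n+1) := by nlinarith [hs1, h7]
            calc G p (n+1) * F p (n+2) ≤ ((-(s p (n+1))) * F p (n+1)) * F p (n+2) :=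
                  mul_le_mul_of_nonneg_right h8 hF2pos.le
              _ = (-(s p (n+1))) * F p (n+2) * F p (n+1) := by ring
          have : G p (n+2) * F p (n+1) ≤ (-(s p (n+1))) * F p (n+2) * F p (n+1) :=
            le_trans hK step1
          exact le_of_mul_le_mul_right (by linarith [this]) hFpos
      · intro hpos1
        have h9 : s p (n+1) ≤ -(G p (n+1)) := by
          have : s p n * (1 - F p (n+1)) ≤ 0 :=
            mul_nonpos_of_nonpos_of_nonneg hsn.le (by linarith)
          linarith [hrec]
        have h10 : p^(n+1) * s p (n+1) ≤ s p (n+1) := by nlinarith [hpos1, hppow1]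
        have : -(G p (n+1)) = (1-p)*p^(n+1) - (1-p)^(n+1) := by simp [G]
        linarith [h10, h9]
    · -- positive regime
      have hrec := s_rec_pos p n (by omega) hmono' hsn
      have hPos := ihpos hsn
      have hqn : (0:ℝ) < (1-p)^n := pow_pos (by linarith) n
      have hinc : s p n ≤ s p (n+1) := by
        -- s_{n+1} - s_n = -p^{n+1} s_n - G(n+1) ≥ 0
        have h11 : p^(n+1) * s p n ≤ (1-p)*p^(n+1) - (1-p)^(n+1) := by
          have h12 : p * (p^n * s p n) ≤ p * ((1-p)*p^n - (1-p)^n) :=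
            mul_le_mul_of_nonneg_left hPos (by linarith)
          have h13 : (1-p)^(n+1) ≤ p * (1-p)^n := by
            rw [pow_succ]
            nlinarith [hqn]
          calc p^(n+1) * s p n = p * (p^n * s p n) := by rw [pow_succ]; ring
            _ ≤ p * ((1-p)*p^n - (1-p)^n) := h12
            _ = (1-p)*p^(n+1) - p*(1-p)^n := by rw [pow_succ]; ring
            _ ≤ (1-p)*p^(n+1) - (1-p)^(n+1) := by linarith
        have hGe : G p (n+1) = (1-p)^(n+1) - (1-p)*p^(n+1) := by simp [G]
        nlinarith [hrec, h11, hGe]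
      refine ⟨?_, ?_, ?_⟩
      · intro k hk hk'
        rcases Nat.lt_or_ge k (n+1) with h | h
        · exact le_trans (ihmono k hk (by omega)) hinc
        · have : k = n+1 := by omega
          rw [this]
      · intro hneg1
        linarith [hinc, hsn]
      · intro _
        set D := (1-p)*p^(n+1) - (1-p)^(n+1) with hD
        have h11 : p^(n+1) * s p n ≤ D := by
          have h12 : p * (p^n * s p n) ≤ p * ((1-p)*p^n - (1-p)^n) :=
            mul_le_mul_of_nonneg_left hPos (by linarith)
          have h13 : (1-p)^(n+1) ≤ p * (1-p)^n := by
            rw [pow_succ]; nlinarith [hqn]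
          calc p^(n+1) * s p n = p * (p^n * s p n) := by rw [pow_succ]; ring
            _ ≤ p * ((1-p)*p^n - (1-p)^n) := h12
            _ = (1-p)*p^(n+1) - p*(1-p)^n := by rw [pow_succ]; ring
            _ ≤ D := by rw [hD]; linarith
        have hDpos : 0 ≤ D := le_trans (mul_nonneg hppow.le hsn) h11
        have hGe : G p (n+1) = (1-p)^(n+1) - (1-p)*p^(n+1) := by simp [G]
        -- p^{n+1} s_{n+1} = (p^{n+1} s_n)(1-p^{n+1}) + p^{n+1} D ≤ D
        have hexp : p^(n+1) * s p (n+1) = (p^(n+1) * s p n) * (1 - p^(n+1)) + p^(n+1) * D := by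
          rw [hrec, hGe, hD]; ring
        have h14 : (p^(n+1) * s p n) * (1 - p^(n+1)) ≤ D * (1 - p^(n+1)) :=
          mul_le_mul_of_nonneg_right h11 (by linarith)
        calc p^(n+1) * s p (n+1) ≤ D * (1 - p^(n+1)) + p^(n+1) * D := by linarith [hexp, h14]
          _ = D := by ring
          _ = (1-p)*p^(n+1) - (1-p)^(n+1) := by rw [hD]

lemma mono_chain (k l : ℕ) (hk : 2 ≤ k) (hkl : k ≤ l) : s p k ≤ s p l :=
  (master hp hp1 l (le_trans hk hkl)).1 k hk hkl

lemma s2_lb : -(1/8) ≤ s p 2 := by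
  rw [s_two hp hp1]
  nlinarith [sq_nonneg (p - 1/2), sq_nonneg p]

lemma s_lb (k : ℕ) (hk : 2 ≤ k) : -(1/8) ≤ s p k :=
  le_trans (s2_lb hp hp1) (mono_chain hp hp1 2 k (le_refl 2) hk)

lemma G_lb (k : ℕ) : -((1-p)*p^k) ≤ G p k := by
  have : (0:ℝ) ≤ (1-p)^k := pow_nonneg (by linarith) k
  simp only [G]; linarith

lemma bern (k : ℕ) : (k:ℝ) + 2 ≤ 8*(8/7:ℝ)^k := by
  have h := one_add_mul_le_pow (show (-2:ℝ) ≤ 1/7 by norm_num) k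
  have : (1 + (k:ℝ) * (1/7)) = (7 + k)/7 := by ring
  rw [this] at h
  have h2 : (1 + (1:ℝ)/7) = 8/7 := by norm_num
  rw [h2] at h
  nlinarith [pow_nonneg (show (0:ℝ) ≤ 8/7 by norm_num) k]

lemma inc_le (hp34 : p ≤ 3/4) (k : ℕ) (hk : 2 ≤ k) :
    s p (k+1) ≤ s p k + 8*(6/7:ℝ)^k := by
  have hmono' : ∀ j, 2 ≤ j → j ≤ k → s p j ≤ s p k := (master hp hp1 k hk).1
  have hpk : (0:ℝ) ≤ p^k := pow_nonneg (by linarith) k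
  have hp34k : p^k ≤ (3/4:ℝ)^k := pow_le_pow_left₀ (by linarith) hp34 k
  have h67 : ((8/7:ℝ)^k) * ((3/4:ℝ)^k) = (6/7:ℝ)^k := by
    rw [← mul_pow]; norm_num
  have hbern := bern (p := p) hp hp1 k
  have hGlb := G_lb hp hp1 (k+1)
  have hq : (0:ℝ) ≤ 1 - p := by linarith
  have hpow1 : (1-p)*p^(k+1) ≤ p^k := by
    rw [pow_succ]
    have h5 : (1-p)*p ≤ 1 := by nlinarith
    nlinarith [mul_le_mul_of_nonneg_right h5 hpk]
  rcases lt_or_ge (s p k) 0 with hs | hs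
  · have hrec := s_rec_neg p k (by omega) hmono' hs.le
    have hslb := s_lb hp hp1 k hk
    have hFb : F p (k+1) ≤ ((k:ℝ)+2) * p^k := by
      rw [F_succ]
      have hpe : p^(k+1) = p^k * p := pow_succ p k
      have hA : p^k*p ≤ p^k := by nlinarith [hpk]
      have hB : ((k:ℝ)+1)*p^k*(1-p) ≤ ((k:ℝ)+1)*p^k := by
        have hc : (0:ℝ) ≤ ((k:ℝ)+1)*p^k := mul_nonneg (by positivity) hpk
        nlinarith [hc]
      linarith [hpe ▸ hA, hB]
    have hFnn : 0 ≤ F p (k+1) := (F_pos hp hp1 (k+1)).le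
    -- s_{k+1} = s_k (1 - F) - G ≤ s_k + (1/8) F + (1-p)p^{k+1}
    have h1 : s p (k+1) ≤ s p k + (1/8) * F p (k+1) + (1-p)*p^(k+1) := by
      have : (-(s p k)) * F p (k+1) ≤ (1/8) * F p (k+1) :=
        mul_le_mul_of_nonneg_right (by linarith) hFnn
      nlinarith [hrec, hGlb]
    have h2 : (1/8) * F p (k+1) + (1-p)*p^(k+1) ≤ ((k:ℝ)+2) * p^k := by
      have hk2 : (4:ℝ) ≤ (k:ℝ) + 2 := by
        have : (2:ℝ) ≤ (k:ℝ) := by exact_mod_cast hk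
        linarith
      nlinarith [hFb, hpow1, hpk, hFnn]
    have h3 : ((k:ℝ)+2) * p^k ≤ 8*(6/7:ℝ)^k := by
      calc ((k:ℝ)+2) * p^k ≤ (8*(8/7:ℝ)^k) * p^k := mul_le_mul_of_nonneg_right hbern hpk
        _ ≤ (8*(8/7:ℝ)^k) * (3/4:ℝ)^k := by
            apply mul_le_mul_of_nonneg_left hp34k
            positivity
        _ = 8*(6/7:ℝ)^k := by rw [mul_assoc, h67]
    linarith
  · have hrec := s_rec_pos p k (by omega) hmono' hs
    have h1 : s p (k+1) ≤ s p k + (1-p)*p^(k+1) := by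
      nlinarith [hrec, hGlb, mul_nonneg (pow_nonneg (show (0:ℝ) ≤ p by linarith) (k+1)) hs]
    have h3 : (1-p)*p^(k+1) ≤ 8*(6/7:ℝ)^k := by
      have h4 : (3/4:ℝ)^k ≤ (6/7:ℝ)^k := pow_le_pow_left₀ (by norm_num) (by norm_num) k
      nlinarith [hpow1, hp34k, pow_nonneg (show (0:ℝ) ≤ (6/7:ℝ) by norm_num) k]
    linarith

lemma tail_bound (hp34 : p ≤ 3/4) (m : ℕ) (hm : 2 ≤ m) :
    ∀ M, m ≤ M → s p M ≤ s p m + 56*(6/7:ℝ)^m - 56*(6/7:ℝ)^M := by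
  intro M hM
  induction M, hM using Nat.le_induction with
  | base => linarith
  | succ M hM ih =>
    have h1 := inc_le hp hp1 hp34 M (by omega)
    have h2 : (56:ℝ)*(6/7:ℝ)^(M+1) = 48*(6/7:ℝ)^M := by
      rw [pow_succ]; ring
    linarith

lemma s_le_L {L : ℝ} (hL : Filter.Tendsto (fun n : ℕ => s p n) Filter.atTop (nhds L))
    (k : ℕ) (hk : 2 ≤ k) : s p k ≤ L := by
  apply ge_of_tendsto hL
  filter_upwards [Filter.eventually_ge_atTop k] with M hM
  exact mono_chain hp hp1 k M hk hM

lemma L_le_tail {L : ℝ} (hL : Filter.Tendsto (fun n : ℕ => s p n) Filter.atTop (nhds L))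
    (hp34 : p ≤ 3/4) (m : ℕ) (hm : 2 ≤ m) : L ≤ s p m + 56*(6/7:ℝ)^m := by
  apply le_of_tendsto hL
  filter_upwards [Filter.eventually_ge_atTop m] with M hM
  have := tail_bound hp hp1 hp34 m hm M hM
  have hpos : (0:ℝ) ≤ 56*(6/7:ℝ)^M := by positivity
  linarith

lemma pos_tail (n : ℕ) (hn : 2 ≤ n) (hsn : 0 ≤ s p n) :
    ∀ M, n ≤ M → s p M ≤ s p n + p^(n+1) - p^(M+1) := by
  intro M hM
  induction M, hM using Nat.le_induction with
  | base => linarith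
  | succ M hM ih =>
    have hmono' : ∀ j, 2 ≤ j → j ≤ M → s p j ≤ s p M := (master hp hp1 M (by omega)).1
    have hsM : 0 ≤ s p M := le_trans hsn (mono_chain hp hp1 n M hn hM)
    have hrec := s_rec_pos p M (by omega) hmono' hsM
    have hGlb := G_lb hp hp1 (M+1)
    have hpM : (0:ℝ) ≤ p^(M+1) := pow_nonneg (by linarith) _
    have h1 : s p (M+1) ≤ s p M + (1-p)*p^(M+1) := by
      nlinarith [hrec, hGlb, mul_nonneg hpM hsM]
    have h2 : p^(M+1+1) = p^(M+1) * p := pow_succ p (M+1)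
    nlinarith [h1, ih, h2]

lemma L_le_pos {L : ℝ} (hL : Filter.Tendsto (fun n : ℕ => s p n) Filter.atTop (nhds L))
    (n : ℕ) (hn : 2 ≤ n) (hsn : 0 ≤ s p n) : L ≤ s p n + p^(n+1) := by
  apply le_of_tendsto hL
  filter_upwards [Filter.eventually_ge_atTop n] with M hM
  have := pos_tail hp hp1 n hn hsn M hM
  have : (0:ℝ) ≤ p^(M+1) := pow_nonneg (by linarith) _
  linarith [pos_tail hp hp1 n hn hsn M hM]

lemma chi_lower {L : ℝ} (hL : Filter.Tendsto (fun n : ℕ => s p n) Filter.atTop (nhds L))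
    (n : ℕ) (hn : 2 ≤ n) (hsn : 0 ≤ s p n) :
    s p n + (1-p-L)*(p^(n+1)/(1-p)) - (1-p)^(n+1)/p ≤ L := by
  have hppos : (0:ℝ) < p := by linarith
  have hqpos : (0:ℝ) < 1 - p := by linarith
  set χ : ℕ → ℝ := fun M => s p M + (1-p-L)*(p^(M+1)/(1-p)) - (1-p)^(M+1)/p with hχ
  have hmonoχ : ∀ M, n ≤ M → χ n ≤ χ M := by
    intro M hM
    induction M, hM using Nat.le_induction with
    | base => exact le_refl _
    | succ M hM ih =>
      have hmono' : ∀ j, 2 ≤ j → j ≤ M → s p j ≤ s p M := (master hp hp1 M (by omega)).1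
      have hsM : 0 ≤ s p M := le_trans hsn (mono_chain hp hp1 n M hn hM)
      have hrec := s_rec_pos p M (by omega) hmono' hsM
      have hsL : s p M ≤ L := s_le_L hp hp1 hL M (by omega)
      have hGe : G p (M+1) = (1-p)^(M+1) - (1-p)*p^(M+1) := by simp [G]
      have hpM : (0:ℝ) ≤ p^(M+1) := pow_nonneg (by linarith) _
      have hinc : p^(M+1)*(1-p-L) - (1-p)^(M+1) ≤ s p (M+1) - s p M := by
        rw [hrec, hGe]
        nlinarith [mul_le_mul_of_nonneg_left hsL hpM]
      have hd1 : p^(M+1+1)/(1-p) = p^(M+1)/(1-p) - p^(M+1) := by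
        rw [pow_succ]; field_simp; ring
      have hd2 : (1-p)^(M+1+1)/p = (1-p)^(M+1)/p - (1-p)^(M+1) := by
        rw [pow_succ]; field_simp
      have hstep : χ M ≤ χ (M+1) := by
        simp only [hχ]
        rw [hd1, hd2]
        nlinarith [hinc]
      linarith [ih, hstep]
  have hplim : Filter.Tendsto (fun M : ℕ => p^(M+1)) Filter.atTop (nhds 0) := by
    have h0 := tendsto_pow_atTop_nhds_zero_of_lt_one (by linarith : (0:ℝ) ≤ p) hp1
    exact h0.comp (Filter.tendsto_add_atTop_nat 1)
  have hqlim : Filter.Tendsto (fun M : ℕ => (1-p)^(M+1)) Filter.atTop (nhds 0) := by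
    have h0 := tendsto_pow_atTop_nhds_zero_of_lt_one (by linarith : (0:ℝ) ≤ 1-p)
      (by linarith : 1-p < 1)
    exact h0.comp (Filter.tendsto_add_atTop_nat 1)
  have hχlim : Filter.Tendsto χ Filter.atTop (nhds L) := by
    have h1 : Filter.Tendsto (fun M : ℕ => (1-p-L)*(p^(M+1)/(1-p))) Filter.atTop (nhds 0) := by
      have := (hplim.div_const (1-p)).const_mul (1-p-L)
      simpa using this
    have h2 : Filter.Tendsto (fun M : ℕ => (1-p)^(M+1)/p) Filter.atTop (nhds 0) := by
      have := hqlim.div_const p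
      simpa using this
    have := (hL.add h1).sub h2
    simpa using this
  exact ge_of_tendsto hχlim (by
    filter_upwards [Filter.eventually_ge_atTop n] with M hM
    exact hmonoχ M hM)

end master

lemma pow32 : ∀ k : ℕ, 2 ≤ k → 32*((k:ℝ)-1) ≤ (2:ℝ)^(k+3) := by
  intro k hk
  induction k, hk using Nat.le_induction with
  | base => norm_num
  | succ k hk ih =>
    have h32 : (32:ℝ) ≤ (2:ℝ)^(k+3) := by
      calc (32:ℝ) = 2^5 := by norm_num
        _ ≤ 2^(k+3) := pow_le_pow_right₀ (by norm_num) (by omega)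
    have : (2:ℝ)^(k+1+3) = 2*(2:ℝ)^(k+3) := by rw [pow_succ]; ring
    push_cast
    push_cast at ih
    linarith

lemma shalf : ∀ k, 2 ≤ k → s (1/2 : ℝ) k ≤ -(3/32) - ((k:ℝ)-1)*(1/2:ℝ)^k/8 := by
  have hp : (1/2:ℝ) ≤ 1/2 := le_refl _
  have hp1 : (1/2:ℝ) < 1 := by norm_num
  intro k hk
  induction k, hk using Nat.le_induction with
  | base =>
    have h2 := s_two hp hp1
    rw [h2]; norm_num
  | succ k hk ih =>
    set x : ℝ := (1/2:ℝ)^k with hxdef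
    have hxpos : (0:ℝ) < x := pow_pos (by norm_num) k
    have hrel : (2:ℝ)^(k+3)*x = 8 := by
      have h8 : (2:ℝ)^k*(1/2:ℝ)^k = 1 := by
        rw [← mul_pow]; norm_num
      rw [pow_add]
      push_cast
      nlinarith [h8]
    have hck : ((k:ℝ)-1)*x/8 ≤ 1/32 := by
      nlinarith [mul_le_mul_of_nonneg_right (pow32 k hk) hxpos.le, hrel]
    have hknn : (2:ℝ) ≤ (k:ℝ) := by exact_mod_cast hk
    have hsneg : s (1/2:ℝ) k < 0 := by
      have h9 : (0:ℝ) ≤ ((k:ℝ)-1)*x/8 :=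
        div_nonneg (mul_nonneg (by linarith) hxpos.le) (by norm_num)
      nlinarith [ih, h9]
    have hmono' : ∀ j, 2 ≤ j → j ≤ k → s (1/2:ℝ) j ≤ s (1/2:ℝ) k := (master hp hp1 k hk).1
    have hrec := s_rec_neg (1/2:ℝ) k (by omega) hmono' hsneg.le
    have hF : F (1/2:ℝ) (k+1) = ((k:ℝ)+2)*x/2 := by
      rw [F_succ]
      have h10 : (1/2:ℝ)^(k+1) = x/2 := by rw [pow_succ, hxdef]; ring
      rw [h10]; ring
    have hG : G (1/2:ℝ) (k+1) = x/4 := by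
      simp only [G]
      have h1 : (1-(1/2:ℝ)) = 1/2 := by norm_num
      rw [h1]
      have h10 : (1/2:ℝ)^(k+1) = x/2 := by rw [pow_succ, hxdef]; ring
      rw [h10]; ring
    have hF1 : F (1/2:ℝ) (k+1) ≤ 1 := F_le_one hp hp1 (k+1) (by omega)
    rw [hF] at hF1
    have hconv : -(3/32:ℝ) - ((↑(k+1):ℝ)-1)*(1/2:ℝ)^(k+1)/8 = -(3/32) - (k:ℝ)*x/16 := by
      rw [pow_succ, ← hxdef]
      push_cast
      ring
    rw [hrec, hF, hG, hconv]
    have hcle : (3/32:ℝ) + ((k:ℝ)-1)*x/8 ≤ 1/8 := by linarith [hck]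
    have hc2 : s (1/2:ℝ) k ≤ -((3/32:ℝ) + ((k:ℝ)-1)*x/8) := by linarith [ih]
    have hcoef : (0:ℝ) ≤ 1 - ((k:ℝ)+2)*x/2 := by linarith [hF1]
    have hmul := mul_le_mul_of_nonneg_right hc2 hcoef
    nlinarith [hmul, mul_le_mul_of_nonneg_right hcle (by positivity : (0:ℝ) ≤ ((k:ℝ)+2)*x/2)]

lemma s_contOn : ∀ n, 1 ≤ n → ContinuousOn (fun q => s q n) (Set.Ioo (1/2:ℝ) 1) := by
  intro n hn
  induction n, hn using Nat.le_induction with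
  | base =>
    apply continuousOn_const.congr
    intro q _
    exact s_one q
  | succ n hn ih =>
    have heq : ∀ q ∈ Set.Ioo (1/2:ℝ) 1, s q (n+1)
        = s q n + q^(n+1)*(1-q-s q n) - (1-q)^(n+1) + ((n:ℝ)+1)*q^n*(1-q)*max (-(s q n)) 0 := by
      intro q hq
      apply s_rec q n hn
      intro k hk hkn
      rcases Nat.lt_or_ge n 2 with h2 | h2
      · omega
      · exact (master hq.1.le hq.2 n h2).1 k hk hkn
    apply ContinuousOn.congr _ heq
    have c1 : ContinuousOn (fun q : ℝ => q^(n+1)) (Set.Ioo (1/2:ℝ) 1) :=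
      (continuous_pow (n+1)).continuousOn
    have c2 : ContinuousOn (fun q : ℝ => (1-q)^(n+1)) (Set.Ioo (1/2:ℝ) 1) :=
      ((continuous_const.sub continuous_id).pow (n+1)).continuousOn
    have c3 : ContinuousOn (fun q : ℝ => q^n) (Set.Ioo (1/2:ℝ) 1) :=
      (continuous_pow n).continuousOn
    have c4 : ContinuousOn (fun q : ℝ => max (-(s q n)) 0) (Set.Ioo (1/2:ℝ) 1) := by
      apply ContinuousOn.sup (ih.neg) continuousOn_const
    exact ((ih.add (c1.mul ((continuousOn_const.sub continuousOn_id).sub ih))).sub c2).add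
      (((continuousOn_const.mul c3).mul (continuousOn_const.sub continuousOn_id)).mul c4)

/-- `IsNp p m` asserts that `m` is the smallest integer `n ≥ 2` with `s p n ≥ 0`. -/
def IsNp (p : ℝ) (m : ℕ) : Prop :=
  2 ≤ m ∧ 0 ≤ s p m ∧ ∀ k : ℕ, 2 ≤ k → 0 ≤ s p k → m ≤ k

set_option maxHeartbeats 2000000 in
theorem coin_game_s_bounds_near_p0 (S : ℝ → ℝ)
    (hS : ∀ p : ℝ, 1 / 2 ≤ p → p ≤ 1 →
      Filter.Tendsto (fun n : ℕ => s p n) Filter.atTop (nhds (S p)))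
    (p0 : ℝ) (hp0l : 1 / 2 ≤ p0) (hp0u : p0 < 1) (hp0z : S p0 = 0)
    (hp0uniq : ∀ q : ℝ, 1 / 2 ≤ q → q < 1 → S q = 0 → q = p0) :
    ∀ ε : ℝ, 0 < ε → ∃ δ : ℝ, 0 < δ ∧ ∀ p : ℝ, p0 < p → p < p0 + δ →
      ∃ m : ℕ, IsNp p m ∧ (1 - ε) * p ^ (m + 1) < S p ∧ S p < (1 + ε) * p ^ m := by
  classical
  intro ε hε
  -- Step 1 : S (1/2) ≤ -3/32, hence p0 > 1/2
  have hS12 : S (1/2) ≤ -(3/32) := by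
    apply le_of_tendsto (hS (1/2) (le_refl _) (by norm_num))
    filter_upwards [Filter.eventually_ge_atTop 2] with M hM
    have h1 := shalf M hM
    have hM2 : (2:ℝ) ≤ (M:ℝ) := by exact_mod_cast hM
    have h2 : (0:ℝ) ≤ ((M:ℝ)-1)*(1/2:ℝ)^M/8 :=
      div_nonneg (mul_nonneg (by linarith) (by positivity)) (by norm_num)
    linarith
  have hp0gt : 1/2 < p0 := by
    rcases eq_or_lt_of_le hp0l with h | h
    · exfalso
      rw [← h] at hp0z
      linarith
    · exact h
  -- Step 2 : p0 < 2/3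
  have hp0lt : p0 < 2/3 := by
    by_contra hcon
    push_neg at hcon
    have hs2 : s p0 2 ≤ S p0 := s_le_L hp0l hp0u (hS p0 hp0l hp0u.le) 2 (le_refl 2)
    rw [hp0z, s_two hp0l hp0u] at hs2
    nlinarith [hs2, hp0u, hcon]
  set q0 : ℝ := (1-p0)/p0 with hq0def
  have hp0pos : (0:ℝ) < p0 := by linarith
  have hq0nn : 0 ≤ q0 := div_nonneg (by linarith) hp0pos.le
  have hq0lt : q0 < 1 := by rw [div_lt_one hp0pos]; linarith
  -- Step 3 : S (2/3) > 0
  have hS23 : (0:ℝ) < S (2/3) := by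
    have h1 : s (2/3:ℝ) 2 ≤ S (2/3) :=
      s_le_L (by norm_num) (by norm_num) (hS (2/3) (by norm_num) (by norm_num)) 2 (le_refl 2)
    rw [s_two (by norm_num : (1/2:ℝ) ≤ 2/3) (by norm_num : (2/3:ℝ) < 1)] at h1
    norm_num at h1
    linarith
  -- Step 4 : sign of S on (p0, 2/3]
  have hSpos : ∀ x, p0 < x → x ≤ 2/3 → 0 < S x := by
    intro x hx1 hx2
    have hx12 : 1/2 ≤ x := by linarith
    have hx1' : x < 1 := by linarith
    have hne : S x ≠ 0 := fun h => absurd (hp0uniq x hx12 hx1' h) (by linarith)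
    rcases lt_or_gt_of_ne hne with hlt | hgt
    · exfalso
      have hKsub : Set.Icc x (2/3:ℝ) ⊆ Set.Ioo (1/2:ℝ) 1 := by
        intro y hy
        exact ⟨by linarith [hy.1], by linarith [hy.2]⟩
      have hunif : TendstoUniformlyOn (fun m (q:ℝ) => s q m) S Filter.atTop
          (Set.Icc x (2/3)) := by
        rw [Metric.tendstoUniformlyOn_iff]
        intro ε' hε'
        have htd : Filter.Tendsto (fun m : ℕ => (56:ℝ)*(6/7)^m) Filter.atTop (nhds 0) := by
          have := (tendsto_pow_atTop_nhds_zero_of_lt_one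
            (by norm_num : (0:ℝ) ≤ 6/7) (by norm_num)).const_mul (56:ℝ)
          simpa using this
        have hev : ∀ᶠ m in Filter.atTop, (56:ℝ)*(6/7)^m < ε' :=
          htd.eventually (eventually_lt_nhds hε')
        filter_upwards [hev, Filter.eventually_ge_atTop 2] with m h56 hm2
        intro q hq
        have hq12 : 1/2 ≤ q := by linarith [hq.1]
        have hq1 : q < 1 := by linarith [hq.2]
        have hq34 : q ≤ 3/4 := by linarith [hq.2]
        have hLq := hS q hq12 hq1.le
        have hub := L_le_tail hq12 hq1 hLq hq34 m hm2
        have hlb := s_le_L hq12 hq1 hLq m hm2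
        rw [Real.dist_eq, abs_sub_lt_iff]
        constructor <;> linarith
      have hcontS : ContinuousOn S (Set.Icc x (2/3)) := by
        apply hunif.continuousOn
        apply Filter.Eventually.frequently
        filter_upwards [Filter.eventually_ge_atTop 1] with m hm
        exact (s_contOn m hm).mono hKsub
      obtain ⟨y, hy, hSy⟩ := intermediate_value_Icc hx2 hcontS ⟨hlt.le, hS23.le⟩
      have hyp0 : y = p0 := hp0uniq y (by linarith [hy.1]) (by linarith [hy.2]) hSy
      linarith [hy.1]
    · exact hgt
  -- Step 5 : strict negativity at p0
  have hneg : ∀ k, 2 ≤ k → s p0 k < 0 := by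
    intro k hk
    have hle : s p0 k ≤ 0 := by
      have h := s_le_L hp0l hp0u (hS p0 hp0l hp0u.le) k hk
      rw [hp0z] at h
      exact h
    rcases lt_or_eq_of_le hle with h | h
    · exact h
    · exfalso
      have hzero : ∀ l, k ≤ l → s p0 l = 0 := by
        intro l hl
        have h1 : s p0 k ≤ s p0 l := mono_chain hp0l hp0u k l hk hl
        have h2 : s p0 l ≤ 0 := by
          have h3 := s_le_L hp0l hp0u (hS p0 hp0l hp0u.le) l (by omega)
          rw [hp0z] at h3
          exact h3
        linarith
      have hG0 : ∀ l, k ≤ l → G p0 (l+1) = 0 := by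
        intro l hl
        have hmono' := (master hp0l hp0u l (by omega)).1
        have hrec := s_rec_pos p0 l (by omega) hmono' (le_of_eq (hzero l hl).symm)
        rw [hzero l hl, hzero (l+1) (by omega)] at hrec
        linarith
      have e1 := hG0 k (le_refl k)
      have e2 := hG0 (k+1) (by omega)
      simp only [G] at e1 e2
      have hfac : (1-2*p0)*((1-p0)*p0^(k+1)) = 0 := by
        linear_combination e2 - (1-p0)*e1
      rcases mul_eq_zero.mp hfac with h5 | h5
      · linarith
      · have : (0:ℝ) < (1-p0)*p0^(k+1) :=
          mul_pos (by linarith) (pow_pos hp0pos _)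
        linarith
  -- Step 6 : choose m
  set ε' : ℝ := min ε (1/2) with hε'def
  have hε'pos : 0 < ε' := lt_min hε (by norm_num)
  have hε'le : ε' ≤ ε := min_le_left _ _
  have htd2 : Filter.Tendsto (fun m : ℕ => (224:ℝ)*(6/7)^m + 2*q0^m)
      Filter.atTop (nhds 0) := by
    have h1 := (tendsto_pow_atTop_nhds_zero_of_lt_one
      (by norm_num : (0:ℝ) ≤ 6/7) (by norm_num)).const_mul (224:ℝ)
    have h2 := (tendsto_pow_atTop_nhds_zero_of_lt_one hq0nn hq0lt).const_mul (2:ℝ)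
    have := h1.add h2
    simpa using this
  obtain ⟨m₁, hm₁⟩ := Filter.eventually_atTop.mp (htd2.eventually (eventually_lt_nhds hε'pos))
  set m : ℕ := max m₁ 3 with hmdef
  have hm3 : 3 ≤ m := le_max_right _ _
  have hm2 : 2 ≤ m := by omega
  have hmB : (224:ℝ)*(6/7)^m + 2*q0^m < ε' := hm₁ m (le_max_left _ _)
  -- Step 7 : choose δ
  have hca : ContinuousAt (fun q : ℝ => s q m) p0 :=
    (s_contOn m (by omega)).continuousAt (isOpen_Ioo.mem_nhds ⟨hp0gt, hp0u⟩)
  have hprem : (fun q : ℝ => s q m) ⁻¹' (Set.Iio 0) ∈ nhds p0 :=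
    hca (Iio_mem_nhds (hneg m hm2))
  obtain ⟨δ₂, hδ₂pos, hball⟩ := Metric.mem_nhds_iff.mp hprem
  refine ⟨min (2/3 - p0) δ₂, lt_min (by linarith) hδ₂pos, ?_⟩
  intro p hp1' hp2'
  have hp23 : p < 2/3 := by
    have := min_le_left (2/3 - p0) δ₂
    linarith
  have hpδ₂ : p - p0 < δ₂ := by
    have := min_le_right (2/3 - p0) δ₂
    linarith
  have hp12 : (1/2:ℝ) ≤ p := by linarith
  have hpl1 : p < 1 := by linarith
  have hp34 : p ≤ 3/4 := by linarith
  have hL := hS p hp12 hpl1.le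
  have hsm_neg : s p m < 0 := by
    have : p ∈ Metric.ball p0 δ₂ := by
      rw [Metric.mem_ball, Real.dist_eq, abs_of_pos (by linarith : (0:ℝ) < p - p0)]
      exact hpδ₂
    exact hball this
  have hLpos : 0 < S p := hSpos p hp1' hp23.le
  -- existence of an index where s is nonneg
  have hex : ∃ k, 2 ≤ k ∧ 0 ≤ s p k := by
    have hev : ∀ᶠ k in Filter.atTop, s p k ∈ Set.Ioi 0 := hL (Ioi_mem_nhds hLpos)
    obtain ⟨k₀, hk₀⟩ := Filter.eventually_atTop.mp hev
    exact ⟨max k₀ 2, le_max_right _ _, (hk₀ (max k₀ 2) (le_max_left _ _)).le⟩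
  obtain ⟨n, hn2, hsn, hmin⟩ : ∃ n, 2 ≤ n ∧ 0 ≤ s p n ∧ ∀ k, k < n → ¬(2 ≤ k ∧ 0 ≤ s p k) :=
    ⟨Nat.find hex, (Nat.find_spec hex).1, (Nat.find_spec hex).2,
      fun k hk => Nat.find_min hex hk⟩
  have hIs : IsNp p n := by
    refine ⟨hn2, hsn, ?_⟩
    intro k hk2 hsk
    by_contra hcon
    push_neg at hcon
    exact hmin k hcon ⟨hk2, hsk⟩
  have hmn : m < n := by
    by_contra hcon
    push_neg at hcon
    have := mono_chain hp12 hpl1 n m hn2 hcon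
    linarith
  obtain ⟨n', rfl⟩ : ∃ n', n = n' + 1 := ⟨n-1, by omega⟩
  have hn'2 : 2 ≤ n' := by omega
  have hsn' : s p n' < 0 := by
    have h := hmin n' (by omega)
    push_neg at h
    exact h hn'2
  have hppow : (0:ℝ) < p^(n'+1) := pow_pos (by linarith) _
  have hppow2 : (0:ℝ) < p^(n'+2) := pow_pos (by linarith) _
  -- upper bound : S p ≤ p^(n'+1)
  have hup : S p ≤ p^(n'+1) := by
    have hrecn := s_rec_neg p n' (by omega) ((master hp12 hpl1 n' hn'2).1) hsn'.le
    have hcoef : (0:ℝ) ≤ 1 - F p (n'+1) := by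
      linarith [F_le_one hp12 hpl1 (n'+1) (by omega)]
    have hGlb := G_lb hp12 hpl1 (n'+1)
    have hsnle : s p (n'+1) ≤ (1-p)*p^(n'+1) := by
      have h6 : s p n' * (1 - F p (n'+1)) ≤ 0 :=
        mul_nonpos_of_nonpos_of_nonneg hsn'.le hcoef
      linarith [hrecn]
    have hup1 : S p ≤ s p (n'+1) + p^(n'+1+1) :=
      L_le_pos hp12 hpl1 hL (n'+1) (by omega) hsn
    have he : (1-p)*p^(n'+1) + p^(n'+1+1) = p^(n'+1) := by
      rw [pow_succ]
      ring
    linarith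
  have hupper : S p < (1+ε)*p^(n'+1) := by
    have h7 : (0:ℝ) < ε*p^(n'+1) := mul_pos hε hppow
    have h8 : (1+ε)*p^(n'+1) = p^(n'+1) + ε*p^(n'+1) := by ring
    linarith
  -- lower bound
  have hLub : S p ≤ 56*(6/7:ℝ)^m := by
    have := L_le_tail hp12 hpl1 hL hp34 m hm2
    linarith
  have hlower : (1-ε)*p^(n'+1+1) < S p := by
    have hchi := chi_lower hp12 hpl1 hL (n'+1) (by omega) hsn
    set u : ℝ := p^(n'+1+1)/(1-p) with hudef
    set w : ℝ := (1-p)^(n'+1+1)/p with hwdef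
    have hqp : (0:ℝ) < 1 - p := by linarith only [hpl1]
    have hpp : (0:ℝ) < p := by linarith only [hp12]
    have hppow2 : (0:ℝ) < p^(n'+1+1) := pow_pos hpp _
    have hu_eq : u * (1-p) = p^(n'+1+1) := by
      rw [hudef]
      field_simp
    have hw_eq : w * p = (1-p)^(n'+1+1) := by
      rw [hwdef]
      field_simp
    have hu_nn : 0 ≤ u := div_nonneg hppow2.le hqp.le
    have hw_nn : 0 ≤ w := div_nonneg (pow_nonneg hqp.le _) hpp.le
    have hu_le : u ≤ 3*p^(n'+1+1) := by
      have h8 : (1:ℝ)/3 ≤ 1 - p := by linarith only [hp23]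
      have h8' := mul_le_mul_of_nonneg_left h8 hu_nn
      linarith only [h8', hu_eq]
    have hqle : 1 - p ≤ q0 * p := by
      rw [hq0def, div_mul_eq_mul_div, le_div_iff₀ hp0pos]
      nlinarith only [hp1', hp0pos, hpl1]
    have hqpow : (1-p)^(n'+1+1) ≤ q0^m * p^(n'+1+1) := by
      have h9 : (1-p)^(n'+1+1) ≤ (q0*p)^(n'+1+1) :=
        pow_le_pow_left₀ hqp.le hqle _
      have h10 : (q0*p)^(n'+1+1) = q0^(n'+1+1) * p^(n'+1+1) := mul_pow _ _ _
      have h11 : q0^(n'+1+1) ≤ q0^m :=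
        pow_le_pow_of_le_one hq0nn hq0lt.le (by omega)
      have h11' := mul_le_mul_of_nonneg_right h11 hppow2.le
      linarith only [h9, h10, h11']
    have hw_le : w ≤ 2*(q0^m*p^(n'+1+1)) := by
      have h12' := mul_le_mul_of_nonneg_left (show (1/2:ℝ) ≤ p by linarith only [hp12]) hw_nn
      linarith only [hw_eq, hqpow, h12']
    have h67nn : (0:ℝ) ≤ (6/7:ℝ)^m := by positivity
    have hq0mnn : (0:ℝ) ≤ q0^m := pow_nonneg hq0nn m
    have hLu : S p * u ≤ 56*(6/7:ℝ)^m * (3*p^(n'+1+1)) :=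
      mul_le_mul hLub hu_le hu_nn (by positivity)
    have hexp : (1-p-S p)*u = u*(1-p) - S p*u := by ring
    have hfromchi : p^(n'+1+1) - S p * u - w ≤ S p := by
      linarith only [hchi, hexp, hu_eq, hsn]
    have hmain : p^(n'+1+1) * (1 - 224*(6/7:ℝ)^m - 2*q0^m) ≤ S p := by
      have h13 := mul_nonneg h67nn hppow2.le
      nlinarith only [hfromchi, hLu, hw_le, h13]
    have hstrict : (1-ε')*p^(n'+1+1) < p^(n'+1+1) * (1 - 224*(6/7:ℝ)^m - 2*q0^m) := by
      have h12 : 1-ε' < 1 - 224*(6/7:ℝ)^m - 2*q0^m := by linarith only [hmB]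
      have h14 := mul_lt_mul_of_pos_right h12 hppow2
      linarith only [h14]
    have hεε' : (1-ε)*p^(n'+1+1) ≤ (1-ε')*p^(n'+1+1) :=
      mul_le_mul_of_nonneg_right (by linarith only [hε'le]) hppow2.le
    linarith only [hεε', hstrict, hmain]
  exact ⟨n'+1, hIs, by linarith [hlower], hupper⟩
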